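/- arXiv:1102.4088 — 5 statements merged into one kernel-verified Lean document; each statement's English description precedes it below -/
import Mathlib

section
/- Let Γ be an abelian group, A a Γ-graded ring, ᾱ = (α_1,…,α_m) ∈ Γ^m and δ̄ = (δ_1,…,δ_n) ∈ Γ^n. The following are equivalent: (1) A^m(ᾱ) and A^n(δ̄) are isomorphic as graded right A-modules; (2) A^m(−ᾱ) and A^n(−δ̄) are isomorphic as graded left A-modules; (3) there exist an n×m matrix a = (a_{ij}) over A with a_{ij} ∈ A_{δ_i − α_j} for all i, j, and an m×n matrix b = (b_{ij}) over A with b_{ij} ∈ A_{α_i − δ_j} for all i, j, such that a·b = I_n and b·a = I_m. -/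
/-!
Proposition (graded free modules): for a Γ-graded ring A, shift tuples
ᾱ ∈ Γ^m, δ̄ ∈ Γ^n, the following are equivalent:
(1) A^m(ᾱ) ≅ A^n(δ̄) as graded right A-modules,
(2) A^m(−ᾱ) ≅ A^n(−δ̄) as graded left A-modules,
(3) there are matrices a, b with homogeneous entries of the indicated degrees
    with a·b = 1 and b·a = 1.
-/

/-- A graded isomorphism `A^m(ᾱ) ≅ A^n(δ̄)` of shifted graded free *right*
`A`-modules: an additive bijection commuting with the right `A`-action which
maps the degree-`γ` component onto the degree-`γ` component, where
`A^m(ᾱ)_γ = {v | ∀ i, v i ∈ 𝒜 (γ + α i)}`. -/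
def GradedRightFreeIso {Γ : Type*} [AddCommGroup Γ] {A : Type*} [Ring A]
    (𝒜 : Γ → AddSubgroup A) {m n : ℕ} (α : Fin m → Γ) (δ : Fin n → Γ) : Prop :=
  ∃ φ : (Fin m → A) ≃+ (Fin n → A),
    (∀ (v : Fin m → A) (a : A), φ (fun i => v i * a) = fun j => φ v j * a) ∧
    ∀ (γ : Γ) (v : Fin m → A), (∀ i, v i ∈ 𝒜 (γ + α i)) ↔ ∀ j, φ v j ∈ 𝒜 (γ + δ j)

/-- A graded isomorphism `A^m(ᾱ) ≅ A^n(δ̄)` of shifted graded free *left*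
`A`-modules. -/
def GradedLeftFreeIso {Γ : Type*} [AddCommGroup Γ] {A : Type*} [Ring A]
    (𝒜 : Γ → AddSubgroup A) {m n : ℕ} (α : Fin m → Γ) (δ : Fin n → Γ) : Prop :=
  ∃ φ : (Fin m → A) ≃+ (Fin n → A),
    (∀ (v : Fin m → A) (a : A), φ (fun i => a * v i) = fun j => a * φ v j) ∧
    ∀ (γ : Γ) (v : Fin m → A), (∀ i, v i ∈ 𝒜 (γ + α i)) ↔ ∀ j, φ v j ∈ 𝒜 (γ + δ j)

section Aux

variable {Γ : Type*} [AddCommGroup Γ] [DecidableEq Γ] {A : Type*} [Ring A]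

lemma single_mem_shift (𝒜 : Γ → AddSubgroup A) [GradedRing 𝒜]
    {m : ℕ} (β : Fin m → Γ) (i k : Fin m) :
    (Pi.single i 1 : Fin m → A) k ∈ 𝒜 (-β i + β k) := by
  rcases eq_or_ne k i with rfl | h
  · rw [Pi.single_eq_same, neg_add_cancel]
    exact SetLike.one_mem_graded 𝒜
  · rw [Pi.single_eq_of_ne h]
    exact zero_mem _

lemma mulVec_id_eq_one {k : ℕ} {M : Matrix (Fin k) (Fin k) A}
    (h : ∀ w, M.mulVec w = w) : M = 1 := by
  ext i j
  have := congrFun (h (Pi.single j 1)) i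
  simpa [Matrix.one_apply, Pi.single_apply, eq_comm] using this

lemma vecMul_id_eq_one {k : ℕ} {M : Matrix (Fin k) (Fin k) A}
    (h : ∀ w, Matrix.vecMul w M = w) : M = 1 := by
  ext i j
  have := congrFun (h (Pi.single i 1)) j
  simpa [Matrix.one_apply, Pi.single_apply, eq_comm] using this

lemma repr_right {m n : ℕ} (ψ : (Fin m → A) ≃+ (Fin n → A))
    (hlin : ∀ (v : Fin m → A) (c : A), ψ (fun i => v i * c) = fun j => ψ v j * c)
    (v : Fin m → A) :
    ψ v = Matrix.mulVec (fun j i => ψ (Pi.single i 1) j) v := by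
  have hv : v = ∑ i, (fun k => (Pi.single i 1 : Fin m → A) k * v i) := by
    funext k
    simp [Pi.single_apply, ite_mul, Finset.sum_apply]
  calc ψ v = ψ (∑ i, fun k => (Pi.single i 1 : Fin m → A) k * v i) := by rw [← hv]
    _ = ∑ i, ψ (fun k => (Pi.single i 1 : Fin m → A) k * v i) := map_sum ψ _ _
    _ = ∑ i, (fun j => ψ (Pi.single i 1) j * v i) := by simp_rw [hlin]
    _ = _ := by
        funext j
        simp [Matrix.mulVec, dotProduct, Finset.sum_apply]

lemma repr_left {m n : ℕ} (ψ : (Fin m → A) ≃+ (Fin n → A))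
    (hlin : ∀ (v : Fin m → A) (c : A), ψ (fun i => c * v i) = fun j => c * ψ v j)
    (v : Fin m → A) :
    ψ v = Matrix.vecMul v (fun i j => ψ (Pi.single i 1) j) := by
  have hv : v = ∑ i, (fun k => v i * (Pi.single i 1 : Fin m → A) k) := by
    funext k
    simp [Pi.single_apply, mul_ite, Finset.sum_apply]
  calc ψ v = ψ (∑ i, fun k => v i * (Pi.single i 1 : Fin m → A) k) := by rw [← hv]
    _ = ∑ i, ψ (fun k => v i * (Pi.single i 1 : Fin m → A) k) := map_sum ψ _ _
    _ = ∑ i, (fun j => v i * ψ (Pi.single i 1) j) := by simp_rw [hlin]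
    _ = _ := by
        funext j
        simp [Matrix.vecMul, dotProduct, Finset.sum_apply]

variable (𝒜 : Γ → AddSubgroup A) [GradedRing 𝒜] {m n : ℕ}

lemma right_iff_matrix (α : Fin m → Γ) (δ : Fin n → Γ) :
    GradedRightFreeIso 𝒜 α δ ↔
      ∃ (a : Matrix (Fin n) (Fin m) A) (b : Matrix (Fin m) (Fin n) A),
        (∀ i j, a i j ∈ 𝒜 (δ i - α j)) ∧ (∀ i j, b i j ∈ 𝒜 (α i - δ j)) ∧
        a * b = 1 ∧ b * a = 1 := by
  constructor
  · rintro ⟨φ, hlin, hgr⟩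
    have hslin : ∀ (w : Fin n → A) (c : A),
        φ.symm (fun j => w j * c) = fun i => φ.symm w i * c := by
      intro w c
      apply φ.injective
      rw [hlin, φ.apply_symm_apply]
      funext j
      rw [φ.apply_symm_apply]
    set a : Matrix (Fin n) (Fin m) A := fun j i => φ (Pi.single i 1) j with ha_def
    set b : Matrix (Fin m) (Fin n) A := fun i j => φ.symm (Pi.single j 1) i with hb_def
    have hφ : ∀ v, φ v = a.mulVec v := repr_right φ hlin
    have hψ : ∀ w, φ.symm w = b.mulVec w := repr_right φ.symm hslin
    refine ⟨a, b, ?_, ?_, ?_, ?_⟩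
    · intro j i
      have h1 := (hgr (-α i) (Pi.single i 1)).1 (fun k => single_mem_shift 𝒜 α i k) j
      have h2 : δ j - α i = -α i + δ j := by abel
      rw [h2]; exact h1
    · intro i j
      have h1 : ∀ j', φ (φ.symm (Pi.single j 1)) j' ∈ 𝒜 (-δ j + δ j') := by
        intro j'
        rw [φ.apply_symm_apply]
        exact single_mem_shift 𝒜 δ j j'
      have h2 := (hgr (-δ j) (φ.symm (Pi.single j 1))).2 h1 i
      have h3 : α i - δ j = -δ j + α i := by abel
      rw [h3]; exact h2
    · apply mulVec_id_eq_one
      intro w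
      rw [← Matrix.mulVec_mulVec, ← hψ, ← hφ, φ.apply_symm_apply]
    · apply mulVec_id_eq_one
      intro w
      rw [← Matrix.mulVec_mulVec, ← hφ, ← hψ, φ.symm_apply_apply]
  · rintro ⟨a, b, ha, hb, hab, hba⟩
    refine ⟨{ toFun := fun v => a.mulVec v
              invFun := fun w => b.mulVec w
              left_inv := fun v => by
                show b.mulVec (a.mulVec v) = v
                rw [Matrix.mulVec_mulVec, hba, Matrix.one_mulVec]
              right_inv := fun w => by
                show a.mulVec (b.mulVec w) = w
                rw [Matrix.mulVec_mulVec, hab, Matrix.one_mulVec]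
              map_add' := fun v w => Matrix.mulVec_add a v w }, ?_, ?_⟩
    · intro v c
      show a.mulVec (fun i => v i * c) = fun j => a.mulVec v j * c
      funext j
      simp [Matrix.mulVec, dotProduct, Finset.sum_mul, mul_assoc]
    · intro γ v
      show (∀ i, v i ∈ 𝒜 (γ + α i)) ↔ ∀ j, a.mulVec v j ∈ 𝒜 (γ + δ j)
      constructor
      · intro h j
        have hterm : ∀ i ∈ Finset.univ, a j i * v i ∈ 𝒜 (γ + δ j) := by
          intro i _
          have h3 : (δ j - α i) + (γ + α i) = γ + δ j := by abel
          exact h3 ▸ SetLike.mul_mem_graded (ha j i) (h i)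
        simpa [Matrix.mulVec, dotProduct] using AddSubgroup.sum_mem _ hterm
      · intro h i
        have hv : v = b.mulVec (a.mulVec v) := by
          rw [Matrix.mulVec_mulVec, hba, Matrix.one_mulVec]
        rw [hv]
        have hterm : ∀ j ∈ Finset.univ, b i j * (a.mulVec v) j ∈ 𝒜 (γ + α i) := by
          intro j _
          have h3 : (α i - δ j) + (γ + δ j) = γ + α i := by abel
          exact h3 ▸ SetLike.mul_mem_graded (hb i j) (h j)
        simpa [Matrix.mulVec, dotProduct] using AddSubgroup.sum_mem _ hterm

lemma left_iff_matrix (α : Fin m → Γ) (δ : Fin n → Γ) :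
    GradedLeftFreeIso 𝒜 (fun i => -α i) (fun j => -δ j) ↔
      ∃ (a : Matrix (Fin n) (Fin m) A) (b : Matrix (Fin m) (Fin n) A),
        (∀ i j, a i j ∈ 𝒜 (δ i - α j)) ∧ (∀ i j, b i j ∈ 𝒜 (α i - δ j)) ∧
        a * b = 1 ∧ b * a = 1 := by
  constructor
  · rintro ⟨φ, hlin, hgr⟩
    have hslin : ∀ (w : Fin n → A) (c : A),
        φ.symm (fun j => c * w j) = fun i => c * φ.symm w i := by
      intro w c
      apply φ.injective
      rw [hlin, φ.apply_symm_apply]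
      funext j
      rw [φ.apply_symm_apply]
    set b : Matrix (Fin m) (Fin n) A := fun i j => φ (Pi.single i 1) j with hb_def
    set a : Matrix (Fin n) (Fin m) A := fun j i => φ.symm (Pi.single j 1) i with ha_def
    have hφ : ∀ v, φ v = Matrix.vecMul v b := repr_left φ hlin
    have hψ : ∀ w, φ.symm w = Matrix.vecMul w a := repr_left φ.symm hslin
    refine ⟨a, b, ?_, ?_, ?_, ?_⟩
    · intro j i
      have h1 : ∀ j', φ (φ.symm (Pi.single j 1)) j' ∈ 𝒜 (-(-δ j) + -δ j') := by
        intro j'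
        rw [φ.apply_symm_apply]
        exact single_mem_shift 𝒜 (fun j => -δ j) j j'
      have h2 := (hgr (-(-δ j)) (φ.symm (Pi.single j 1))).2 h1 i
      have h3 : δ j - α i = -(-δ j) + -α i := by abel
      rw [h3]; exact h2
    · intro i j
      have h1 := (hgr (-(-α i)) (Pi.single i 1)).1
        (fun k => single_mem_shift 𝒜 (fun i => -α i) i k) j
      have h3 : α i - δ j = -(-α i) + -δ j := by abel
      rw [h3]; exact h1
    · apply vecMul_id_eq_one
      intro w
      rw [← Matrix.vecMul_vecMul, ← hψ, ← hφ, φ.apply_symm_apply]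
    · apply vecMul_id_eq_one
      intro w
      rw [← Matrix.vecMul_vecMul, ← hφ, ← hψ, φ.symm_apply_apply]
  · rintro ⟨a, b, ha, hb, hab, hba⟩
    refine ⟨{ toFun := fun v => Matrix.vecMul v b
              invFun := fun w => Matrix.vecMul w a
              left_inv := fun v => by
                show Matrix.vecMul (Matrix.vecMul v b) a = v
                rw [Matrix.vecMul_vecMul, hba, Matrix.vecMul_one]
              right_inv := fun w => by
                show Matrix.vecMul (Matrix.vecMul w a) b = w
                rw [Matrix.vecMul_vecMul, hab, Matrix.vecMul_one]
              map_add' := fun v w => Matrix.add_vecMul b v w }, ?_, ?_⟩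
    · intro v c
      show Matrix.vecMul (fun i => c * v i) b = fun j => c * Matrix.vecMul v b j
      funext j
      simp [Matrix.vecMul, dotProduct, Finset.mul_sum, mul_assoc]
    · intro γ v
      show (∀ i, v i ∈ 𝒜 (γ + -α i)) ↔ ∀ j, Matrix.vecMul v b j ∈ 𝒜 (γ + -δ j)
      constructor
      · intro h j
        have hterm : ∀ i ∈ Finset.univ, v i * b i j ∈ 𝒜 (γ + -δ j) := by
          intro i _
          have h3 : (γ + -α i) + (α i - δ j) = γ + -δ j := by abel
          exact h3 ▸ SetLike.mul_mem_graded (h i) (hb i j)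
        simpa [Matrix.vecMul, dotProduct] using AddSubgroup.sum_mem _ hterm
      · intro h i
        have hv : v = Matrix.vecMul (Matrix.vecMul v b) a := by
          rw [Matrix.vecMul_vecMul, hba, Matrix.vecMul_one]
        rw [hv]
        have hterm : ∀ j ∈ Finset.univ,
            (Matrix.vecMul v b) j * a j i ∈ 𝒜 (γ + -α i) := by
          intro j _
          have h3 : (γ + -δ j) + (δ j - α i) = γ + -α i := by abel
          exact h3 ▸ SetLike.mul_mem_graded (h j) (ha j i)
        simpa [Matrix.vecMul, dotProduct] using AddSubgroup.sum_mem _ hterm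

end Aux

theorem gradedFreeIso_tfae {Γ : Type*} [AddCommGroup Γ] [DecidableEq Γ]
    {A : Type*} [Ring A] (𝒜 : Γ → AddSubgroup A) [GradedRing 𝒜]
    {m n : ℕ} (α : Fin m → Γ) (δ : Fin n → Γ) :
    List.TFAE
      [ GradedRightFreeIso 𝒜 α δ,
        GradedLeftFreeIso 𝒜 (fun i => -α i) (fun j => -δ j),
        ∃ (a : Matrix (Fin n) (Fin m) A) (b : Matrix (Fin m) (Fin n) A),
          (∀ i j, a i j ∈ 𝒜 (δ i - α j)) ∧ (∀ i j, b i j ∈ 𝒜 (α i - δ j)) ∧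
          a * b = 1 ∧ b * a = 1 ] := by
  tfae_have 1 ↔ 3 := right_iff_matrix 𝒜 α δ
  tfae_have 2 ↔ 3 := left_iff_matrix 𝒜 α δ
  tfae_finish
end

section
/- Let Γ be an abelian group, A a Γ-graded ring and α ∈ Γ. The following are equivalent: (1) A(α) ≅ A as graded right A-modules; (2) A(−α) ≅ A as graded right A-modules; (3) A(α) ≅ A as graded left A-modules; (4) A(−α) ≅ A as graded left A-modules; (5) there exists an invertible element of A which is homogeneous of degree α. -/
/-!
Corollary: for a Γ-graded ring A and α ∈ Γ, TFAE:
(1) A(α) ≅ A as graded right A-modules, (2) A(−α) ≅ A as graded right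
A-modules, (3) A(α) ≅ A as graded left A-modules, (4) A(−α) ≅ A as graded
left A-modules, (5) there is an invertible homogeneous element of degree α.
-/

/-- A graded isomorphism `A(α) ≅ A` of *right* `A`-modules: an additive
bijection commuting with the right `A`-action mapping each component
`A(α)_γ = A_{γ+α}` onto `A_γ`. -/
def GradedRightShiftIsoSelf {Γ : Type*} [AddCommGroup Γ] {A : Type*} [Ring A]
    (𝒜 : Γ → AddSubgroup A) (α : Γ) : Prop :=
  ∃ φ : A ≃+ A,
    (∀ x a : A, φ (x * a) = φ x * a) ∧
    ∀ (γ : Γ) (x : A), x ∈ 𝒜 (γ + α) ↔ φ x ∈ 𝒜 γ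

/-- A graded isomorphism `A(α) ≅ A` of *left* `A`-modules. -/
def GradedLeftShiftIsoSelf {Γ : Type*} [AddCommGroup Γ] {A : Type*} [Ring A]
    (𝒜 : Γ → AddSubgroup A) (α : Γ) : Prop :=
  ∃ φ : A ≃+ A,
    (∀ a x : A, φ (a * x) = a * φ x) ∧
    ∀ (γ : Γ) (x : A), x ∈ 𝒜 (γ + α) ↔ φ x ∈ 𝒜 γ

open DirectSum

/-- The inverse of a homogeneous unit of degree `α` is homogeneous of
degree `-α`. -/
lemma units_inv_mem_neg {Γ : Type*} [AddCommGroup Γ] [DecidableEq Γ]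
    {A : Type*} [Ring A] (𝒜 : Γ → AddSubgroup A) [GradedRing 𝒜] {α : Γ}
    (u : Aˣ) (hu : (u : A) ∈ 𝒜 α) : ((u⁻¹ : Aˣ) : A) ∈ 𝒜 (-α) := by
  classical
  set x : A := ((u⁻¹ : Aˣ) : A) with hx
  have key : ∀ δ : Γ, δ ≠ -α → (decompose 𝒜 x δ : A) = 0 := by
    intro δ hδ
    have h1 : (u : A) * x = 1 := u.mul_inv
    have h2 : (decompose 𝒜 ((u : A) * x) (α + δ) : A)
        = (u : A) * (decompose 𝒜 x δ : A) :=
      DirectSum.coe_decompose_mul_add_of_left_mem 𝒜 hu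
    have hne : (0 : Γ) ≠ α + δ := by
      intro h
      apply hδ
      have := h.symm
      -- α + δ = 0 ⟹ δ = -α
      linear_combination (norm := abel) this
    have h3 : (decompose 𝒜 ((u : A) * x) (α + δ) : A) = 0 := by
      rw [h1]
      exact DirectSum.decompose_of_mem_ne 𝒜 (SetLike.one_mem_graded 𝒜) hne
    have h4 : (u : A) * (decompose 𝒜 x δ : A) = 0 := by rw [← h2, h3]
    have := congrArg (fun y => ((u⁻¹ : Aˣ) : A) * y) h4
    simpa [← mul_assoc, u.inv_mul] using this
  have hsum := DirectSum.sum_support_decompose 𝒜 x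
  have heq : (∑ δ ∈ DFinsupp.support (decompose 𝒜 x),
      ((decompose 𝒜 x δ : A))) = (decompose 𝒜 x (-α) : A) := by
    refine Finset.sum_eq_single (-α) (fun δ _ hδ => key δ hδ) ?_
    intro h
    simp [DFinsupp.notMem_support_iff.mp h]
  rw [hsum.symm.trans heq]
  exact (decompose 𝒜 x (-α)).2

/-- Right graded iso `A(α) ≅ A` iff there is a homogeneous unit of degree
`-α` (namely `φ 1`). -/
lemma right_iff {Γ : Type*} [AddCommGroup Γ] [DecidableEq Γ]
    {A : Type*} [Ring A] (𝒜 : Γ → AddSubgroup A) [GradedRing 𝒜] (α : Γ) :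
    GradedRightShiftIsoSelf 𝒜 α ↔ ∃ u : Aˣ, (u : A) ∈ 𝒜 (-α) := by
  constructor
  · rintro ⟨φ, hmul, hgr⟩
    -- φ x = φ 1 * x
    set e : A := φ 1 with he
    have hφ : ∀ x : A, φ x = e * x := fun x => by
      simpa using hmul 1 x
    -- e is a unit: left mult by e is bijective
    obtain ⟨v, hv⟩ : ∃ v, e * v = 1 := by
      obtain ⟨v, hv⟩ := φ.surjective 1
      exact ⟨v, by rw [← hφ, hv]⟩
    have hve : v * e = 1 := by
      have h0 : e * (v * e - 1) = 0 := by
        rw [mul_sub, ← mul_assoc, hv, one_mul, mul_one, sub_self]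
      have := φ.injective (a₁ := v * e - 1) (a₂ := 0) (by
        rw [hφ, hφ, h0, mul_zero])
      exact sub_eq_zero.mp this
    refine ⟨⟨e, v, hv, hve⟩, ?_⟩
    -- 1 ∈ 𝒜 (-α + α) so φ 1 = e ∈ 𝒜 (-α)
    have := (hgr (-α) 1).mp (by
      rw [neg_add_cancel]; exact SetLike.one_mem_graded 𝒜)
    simpa [he] using this
  · rintro ⟨u, hu⟩
    -- φ := left multiplication by u
    refine ⟨{ toFun := fun x => (u : A) * x
              invFun := fun x => ((u⁻¹ : Aˣ) : A) * x
              left_inv := fun x => by simp [← mul_assoc, u.inv_mul]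
              right_inv := fun x => by simp [← mul_assoc, u.mul_inv]
              map_add' := fun x y => by simp [mul_add] },
      fun x a => by simp [mul_assoc], fun γ x => ?_⟩
    have huinv : ((u⁻¹ : Aˣ) : A) ∈ 𝒜 (-(-α)) := units_inv_mem_neg 𝒜 u hu
    rw [neg_neg] at huinv
    constructor
    · intro hx
      have : (u : A) * x ∈ 𝒜 (-α + (γ + α)) := SetLike.mul_mem_graded hu hx
      simpa [add_comm, add_left_comm, add_assoc] using this
    · intro hx
      have : ((u⁻¹ : Aˣ) : A) * ((u : A) * x) ∈ 𝒜 (α + γ) :=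
        SetLike.mul_mem_graded huinv hx
      rw [← mul_assoc, u.inv_mul, one_mul] at this
      simpa [add_comm] using this

/-- Left graded iso `A(α) ≅ A` iff there is a homogeneous unit of degree
`-α`. -/
lemma left_iff {Γ : Type*} [AddCommGroup Γ] [DecidableEq Γ]
    {A : Type*} [Ring A] (𝒜 : Γ → AddSubgroup A) [GradedRing 𝒜] (α : Γ) :
    GradedLeftShiftIsoSelf 𝒜 α ↔ ∃ u : Aˣ, (u : A) ∈ 𝒜 (-α) := by
  constructor
  · rintro ⟨φ, hmul, hgr⟩
    set e : A := φ 1 with he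
    have hφ : ∀ x : A, φ x = x * e := fun x => by
      simpa using hmul x 1
    obtain ⟨v, hv⟩ : ∃ v, v * e = 1 := by
      obtain ⟨v, hv⟩ := φ.surjective 1
      exact ⟨v, by rw [← hφ, hv]⟩
    have hev : e * v = 1 := by
      have h0 : (e * v - 1) * e = 0 := by
        rw [sub_mul, mul_assoc, hv, mul_one, one_mul, sub_self]
      have := φ.injective (a₁ := e * v - 1) (a₂ := 0) (by
        rw [hφ, hφ, h0, zero_mul])
      exact sub_eq_zero.mp this
    refine ⟨⟨e, v, hev, hv⟩, ?_⟩
    have := (hgr (-α) 1).mp (by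
      rw [neg_add_cancel]; exact SetLike.one_mem_graded 𝒜)
    simpa [he] using this
  · rintro ⟨u, hu⟩
    refine ⟨{ toFun := fun x => x * (u : A)
              invFun := fun x => x * ((u⁻¹ : Aˣ) : A)
              left_inv := fun x => by simp [mul_assoc, u.mul_inv]
              right_inv := fun x => by simp [mul_assoc, u.inv_mul]
              map_add' := fun x y => by simp [add_mul] },
      fun a x => by simp [mul_assoc], fun γ x => ?_⟩
    have huinv : ((u⁻¹ : Aˣ) : A) ∈ 𝒜 (-(-α)) := units_inv_mem_neg 𝒜 u hu
    rw [neg_neg] at huinv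
    constructor
    · intro hx
      have : x * (u : A) ∈ 𝒜 (γ + α + -α) := SetLike.mul_mem_graded hx hu
      simpa [add_assoc] using this
    · intro hx
      have : x * (u : A) * ((u⁻¹ : Aˣ) : A) ∈ 𝒜 (γ + α) :=
        SetLike.mul_mem_graded hx huinv
      rwa [mul_assoc, u.mul_inv, mul_one] at this

/-- A homogeneous unit of degree `-α` exists iff one of degree `α` does. -/
lemma units_neg_iff {Γ : Type*} [AddCommGroup Γ] [DecidableEq Γ]
    {A : Type*} [Ring A] (𝒜 : Γ → AddSubgroup A) [GradedRing 𝒜] (α : Γ) :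
    (∃ u : Aˣ, (u : A) ∈ 𝒜 (-α)) ↔ ∃ u : Aˣ, (u : A) ∈ 𝒜 α := by
  constructor
  · rintro ⟨u, hu⟩
    exact ⟨u⁻¹, by simpa using units_inv_mem_neg 𝒜 u hu⟩
  · rintro ⟨u, hu⟩
    exact ⟨u⁻¹, units_inv_mem_neg 𝒜 u hu⟩

theorem gradedShiftIsoSelf_tfae {Γ : Type*} [AddCommGroup Γ] [DecidableEq Γ]
    {A : Type*} [Ring A] (𝒜 : Γ → AddSubgroup A) [GradedRing 𝒜] (α : Γ) :
    List.TFAE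
      [ GradedRightShiftIsoSelf 𝒜 α,
        GradedRightShiftIsoSelf 𝒜 (-α),
        GradedLeftShiftIsoSelf 𝒜 α,
        GradedLeftShiftIsoSelf 𝒜 (-α),
        ∃ u : Aˣ, (u : A) ∈ 𝒜 α ] := by
  have h1 := right_iff 𝒜 α
  have h2 := right_iff 𝒜 (-α)
  have h3 := left_iff 𝒜 α
  have h4 := left_iff 𝒜 (-α)
  have h5 := units_neg_iff 𝒜 α
  rw [neg_neg] at h2 h4
  tfae_have 1 ↔ 5 := h1.trans h5
  tfae_have 2 ↔ 5 := h2
  tfae_have 3 ↔ 5 := h3.trans h5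
  tfae_have 4 ↔ 5 := h4
  tfae_finish
end

section
/- Let Γ be an abelian group and A a Γ-graded field with support Γ_A = {γ ∈ Γ : A_γ ≠ 0}. Let ᾱ = (α_1,…,α_m) ∈ Γ^m and δ̄ = (δ_1,…,δ_n) ∈ Γ^n. Then A^m(ᾱ) and A^n(δ̄) are isomorphic as graded right A-modules if and only if m = n and there exists a bijection σ : {1,…,m} → {1,…,n} such that α_i − δ_{σ(i)} ∈ Γ_A for all i. -/
/-- In a graded field, a nonzero homogeneous element of degree `γ` has an
inverse that is homogeneous of degree `-γ`. -/
lemma exists_homog_inv {Γ : Type*} [AddCommGroup Γ] [DecidableEq Γ]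
    {A : Type*} [CommRing A] (𝒜 : Γ → AddSubgroup A) [GradedRing 𝒜]
    (hinv : ∀ (γ : Γ) (a : A), a ∈ 𝒜 γ → a ≠ 0 → IsUnit a)
    {γ : Γ} {a : A} (ha : a ∈ 𝒜 γ) (ha0 : a ≠ 0) :
    ∃ b ∈ 𝒜 (-γ), a * b = 1 := by
  obtain ⟨u, rfl⟩ := hinv γ a ha ha0
  refine ⟨(DirectSum.decompose 𝒜 (↑u⁻¹ : A) (-γ) : A), SetLike.coe_mem _, ?_⟩
  have h1 : (DirectSum.decompose 𝒜 ((u : A) * (↑u⁻¹ : A)) (γ + -γ) : A)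
      = (u : A) * (DirectSum.decompose 𝒜 (↑u⁻¹ : A) (-γ) : A) :=
    DirectSum.coe_decompose_mul_add_of_left_mem 𝒜 ha
  rw [Units.mul_inv, add_neg_cancel,
    DirectSum.decompose_of_mem_same 𝒜 SetLike.GradedOne.one_mem] at h1
  exact h1.symm

theorem gradedField_free_iso_iff_support_permutation
    {Γ : Type*} [AddCommGroup Γ] [DecidableEq Γ]
    {A : Type*} [CommRing A] [Nontrivial A]
    (𝒜 : Γ → AddSubgroup A) [GradedRing 𝒜]
    (hinv : ∀ (γ : Γ) (a : A), a ∈ 𝒜 γ → a ≠ 0 → IsUnit a)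
    {m n : ℕ} (α : Fin m → Γ) (δ : Fin n → Γ) :
    GradedRightFreeIso 𝒜 α δ ↔
      (m = n ∧ ∃ σ : Fin m ≃ Fin n, ∀ i, 𝒜 (α i - δ (σ i)) ≠ ⊥) := by
  constructor
  · rintro ⟨φ, hlin, hgr⟩
    -- `φ` is `A`-linear since `A` is commutative
    have hsmul : ∀ (a : A) (v : Fin m → A), φ (a • v) = a • φ v := by
      intro a v
      have h1 : (a • v) = fun i => v i * a := by
        funext i; simp [mul_comm]
      rw [h1, hlin v a]
      funext j; simp [mul_comm]
    let e : (Fin m → A) ≃ₗ[A] (Fin n → A) :=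
      { φ with map_smul' := hsmul }
    have hmn : m = n := by
      have h1 := e.finrank_eq
      rwa [Module.finrank_fin_fun, Module.finrank_fin_fun] at h1
    subst hmn
    refine ⟨rfl, ?_⟩
    -- the matrix of `φ.symm`, whose `(i,j)` entry is homogeneous of degree
    -- `α i - δ j`
    set P : Matrix (Fin m) (Fin m) A :=
      LinearMap.toMatrix' (e.symm : (Fin m → A) →ₗ[A] (Fin m → A)) with hP
    have hPmem : ∀ i j, P i j ∈ 𝒜 (α i - δ j) := by
      intro i j
      have hw : ∀ k, (fun k' => if k' = j then (1 : A) else 0) k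
          ∈ 𝒜 (-δ j + δ k) := by
        intro k
        dsimp only
        by_cases h : k = j
        · subst h
          rw [if_pos rfl, neg_add_cancel]
          exact SetLike.GradedOne.one_mem
        · rw [if_neg h]; exact zero_mem _
      have hkey := (hgr (-δ j) (φ.symm (fun k' => if k' = j then (1 : A) else 0))).2
        (by rw [φ.apply_symm_apply]; exact hw) i
      have hPij : P i j = φ.symm (fun k' => if k' = j then (1 : A) else 0) i := by
        rw [hP, LinearMap.toMatrix'_apply]
        have hs : (Pi.single j (1 : A) : Fin m → A) = fun k' => if k' = j then (1 : A) else 0 := by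
          funext k'; exact Pi.single_apply j 1 k'
        rw [hs]; rfl
      rw [hPij, sub_eq_neg_add]
      exact hkey
    -- `P` is invertible, hence has nonzero determinant
    have hPQ : P * LinearMap.toMatrix' (e : (Fin m → A) →ₗ[A] (Fin m → A)) = 1 := by
      rw [hP, ← LinearMap.toMatrix'_comp]
      have : (e.symm : (Fin m → A) →ₗ[A] (Fin m → A)) ∘ₗ
          (e : (Fin m → A) →ₗ[A] (Fin m → A)) = LinearMap.id :=
        LinearMap.ext fun v => e.symm_apply_apply v
      rw [this, LinearMap.toMatrix'_id]
    have hdet : P.det ≠ 0 := (Matrix.isUnit_det_of_right_inverse hPQ).ne_zero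
    -- extract a permutation from a nonzero term of the determinant
    have hterm : ∃ σ : Equiv.Perm (Fin m),
        (Equiv.Perm.sign σ • ∏ i, P (σ i) i) ≠ 0 := by
      by_contra h
      push_neg at h
      exact hdet (by rw [Matrix.det_apply]; exact Finset.sum_eq_zero fun σ _ => h σ)
    obtain ⟨σ, hσ⟩ := hterm
    have hσ' : ∀ i, P (σ i) i ≠ 0 := by
      intro i hzero
      exact hσ (by
        rw [Finset.prod_eq_zero (f := fun k => P (σ k) k) (Finset.mem_univ i) hzero,
          smul_zero])
    refine ⟨σ.symm, fun i hbot => ?_⟩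
    apply hσ' (σ.symm i)
    have hmem := hPmem i (σ.symm i)
    rw [hbot, AddSubgroup.mem_bot] at hmem
    rw [Equiv.apply_symm_apply]
    exact hmem
  · rintro ⟨rfl, σ, hσ⟩
    -- choose nonzero homogeneous elements and their homogeneous inverses
    have hex : ∀ i, ∃ a : A, a ∈ 𝒜 (α i - δ (σ i)) ∧ a ≠ 0 := by
      intro i
      by_contra h
      push_neg at h
      exact hσ i ((AddSubgroup.eq_bot_iff_forall _).2 h)
    choose a ha ha0 using hex
    choose b hb hab using fun i => exists_homog_inv 𝒜 hinv (ha i) (ha0 i)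
    have hba : ∀ i, b i * a i = 1 := fun i => by rw [mul_comm]; exact hab i
    refine ⟨{ toFun := fun v j => v (σ.symm j) * b (σ.symm j)
              invFun := fun w i => w (σ i) * a i
              left_inv := ?_
              right_inv := ?_
              map_add' := ?_ }, ?_, ?_⟩
    · intro v
      funext i
      show v (σ.symm (σ i)) * b (σ.symm (σ i)) * a i = v i
      rw [Equiv.symm_apply_apply, mul_assoc, hba, mul_one]
    · intro w
      funext j
      show w (σ (σ.symm j)) * a (σ.symm j) * b (σ.symm j) = w j
      rw [Equiv.apply_symm_apply, mul_assoc, hab, mul_one]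
    · intro v w
      funext j
      show (v (σ.symm j) + w (σ.symm j)) * b (σ.symm j) = _
      rw [add_mul]
      rfl
    · intro v c
      funext j
      show v (σ.symm j) * c * b (σ.symm j) = v (σ.symm j) * b (σ.symm j) * c
      ring
    · intro γ v
      constructor
      · intro h j
        show v (σ.symm j) * b (σ.symm j) ∈ 𝒜 (γ + δ j)
        have hm := SetLike.mul_mem_graded (h (σ.symm j)) (hb (σ.symm j))
        have hdeg : (γ + α (σ.symm j)) + -(α (σ.symm j) - δ (σ (σ.symm j)))
            = γ + δ j := by
          rw [Equiv.apply_symm_apply]; abel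
        rwa [hdeg] at hm
      · intro h i
        have h1 : v (σ.symm (σ i)) * b (σ.symm (σ i)) ∈ 𝒜 (γ + δ (σ i)) := h (σ i)
        rw [Equiv.symm_apply_apply] at h1
        have hm := SetLike.mul_mem_graded h1 (ha i)
        have heq : v i * b i * a i = v i := by
          rw [mul_assoc, hba, mul_one]
        have hdeg : (γ + δ (σ i)) + (α i - δ (σ i)) = γ + α i := by abel
        rwa [heq, hdeg] at hm
end

section
/- Let n be a prime number, r a natural number, and let a, b be r×r matrices with entries in the subring ℤ[1/n] = {q ∈ ℚ : q = x/n^k for some x ∈ ℤ, k ∈ ℕ} of ℚ, such that every entry of a and every entry of b is nonnegative, a·b = I_r and b·a = I_r. Then a is a generalized permutation matrix whose nonzero entries are integer powers of n: there exist a permutation σ of {1,…,r} and integers c_1,…,c_r ∈ ℤ such that a_{i,σ(i)} = n^{c_i} for all i and a_{ij} = 0 whenever j ≠ σ(i). -/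
/-!
For a prime n and r×r matrices a, b over ℤ[1/n] ⊆ ℚ with nonnegative entries
such that a·b = b·a = I, the matrix a is a generalized permutation matrix
whose nonzero entries are integer powers of n.
-/

/-- A positive rational of the form `x / n ^ k` whose inverse is also of the form
`y / n ^ m` is an integer power of `n`. -/
lemma nadic_pos_unit_is_pow (n : ℕ) (hn : n.Prime) (q : ℚ) (hq : 0 < q)
    (x : ℤ) (k : ℕ) (hx : q = (x : ℚ) / (n : ℚ) ^ k)
    (y : ℤ) (m : ℕ) (hy : q⁻¹ = (y : ℚ) / (n : ℚ) ^ m) :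
    ∃ c : ℤ, q = (n : ℚ) ^ c := by
  have hnpos : (0 : ℚ) < (n : ℚ) := by exact_mod_cast hn.pos
  have hnk : (0 : ℚ) < (n : ℚ) ^ k := pow_pos hnpos k
  have hnm : (0 : ℚ) < (n : ℚ) ^ m := pow_pos hnpos m
  have hmul : q * q⁻¹ = 1 := mul_inv_cancel₀ hq.ne'
  rw [hy, hx] at hmul
  have hq0 : ((x : ℚ)) * (y : ℚ) = ((n : ℚ)) ^ (k + m) := by
    field_simp at hmul
    rw [pow_add]
    linarith [hmul]
  have hxy : x * y = (n : ℤ) ^ (k + m) := by exact_mod_cast hq0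
  have hxd : x ∣ (n : ℤ) ^ (k + m) := ⟨y, hxy.symm⟩
  have hxd' : x.natAbs ∣ n ^ (k + m) := by
    have h := Int.natAbs_dvd_natAbs.mpr hxd
    simpa [Int.natAbs_pow] using h
  obtain ⟨s, hs, hxs⟩ := (Nat.dvd_prime_pow hn).mp hxd'
  have hxpos : 0 < x := by
    have h1 : (0 : ℚ) < (x : ℚ) := by
      have : (0 : ℚ) < (x : ℚ) / (n : ℚ) ^ k := hx ▸ hq
      exact (div_pos_iff.mp this).resolve_right (fun h => absurd hnk (by linarith [h.2])) |>.1
    exact_mod_cast h1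
  have hxq : (x : ℚ) = (n : ℚ) ^ s := by
    have : x = (n : ℤ) ^ s := by
      have := Int.natAbs_of_nonneg hxpos.le
      rw [← this, hxs]; push_cast; ring
    exact_mod_cast this
  refine ⟨(s : ℤ) - (k : ℤ), ?_⟩
  rw [hx, hxq, zpow_sub₀ hnpos.ne', zpow_natCast, zpow_natCast]

theorem nonneg_invertible_nadic_matrix_is_generalized_permutation
    (n : ℕ) (hn : n.Prime) (r : ℕ)
    (a b : Matrix (Fin r) (Fin r) ℚ)
    (hamem : ∀ i j, ∃ (x : ℤ) (k : ℕ), a i j = (x : ℚ) / (n : ℚ) ^ k)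
    (hbmem : ∀ i j, ∃ (x : ℤ) (k : ℕ), b i j = (x : ℚ) / (n : ℚ) ^ k)
    (ha : ∀ i j, 0 ≤ a i j) (hb : ∀ i j, 0 ≤ b i j)
    (hab : a * b = 1) (hba : b * a = 1) :
    ∃ (σ : Equiv.Perm (Fin r)) (c : Fin r → ℤ),
      ∀ i j, a i j = if j = σ i then (n : ℚ) ^ (c i) else 0 := by
  -- each row of a has a positive entry
  have habij : ∀ i k, (∑ l, a i l * b l k) = if i = k then 1 else 0 := by
    intro i k
    have := congrFun (congrFun hab i) k
    simpa [Matrix.mul_apply, Matrix.one_apply] using this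
  have hbaij : ∀ j k, (∑ l, b j l * a l k) = if j = k then 1 else 0 := by
    intro j k
    have := congrFun (congrFun hba j) k
    simpa [Matrix.mul_apply, Matrix.one_apply] using this
  have hrow : ∀ i, ∃ j, 0 < a i j := by
    intro i
    by_contra h
    push_neg at h
    have hz : ∀ j, a i j = 0 := fun j => le_antisymm (h j) (ha i j)
    have := habij i i
    simp [hz] at this
  choose f hf using hrow
  -- key structural facts
  have bzero : ∀ i j, 0 < a i j → ∀ k, k ≠ i → b j k = 0 := by
    intro i j hij k hk
    have hsum := habij i k
    rw [if_neg (fun h => hk (h.symm))] at hsum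
    have hterm : a i j * b j k = 0 := by
      have := (Finset.sum_eq_zero_iff_of_nonneg
        (fun l _ => mul_nonneg (ha i l) (hb l k))).mp hsum j (Finset.mem_univ j)
      exact this
    rcases mul_eq_zero.mp hterm with h | h
    · exact absurd h hij.ne'
    · exact h
  have binv : ∀ i j, 0 < a i j → b j i * a i j = 1 := by
    intro i j hij
    have hsum := hbaij j j
    rw [if_pos rfl] at hsum
    rw [← hsum]
    symm
    apply Finset.sum_eq_single_of_mem i (Finset.mem_univ i)
    intro l _ hl
    rw [bzero i j hij l hl, zero_mul]
  have azero : ∀ i j, 0 < a i j → ∀ k, k ≠ j → a i k = 0 := by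
    intro i j hij k hk
    have hbji : 0 < b j i := by
      have h1 := binv i j hij
      nlinarith [hb j i, ha i j]
    have hsum := hbaij j k
    rw [if_neg (fun h => hk (h.symm))] at hsum
    have hterm : b j i * a i k = 0 :=
      (Finset.sum_eq_zero_iff_of_nonneg
        (fun l _ => mul_nonneg (hb j l) (ha l k))).mp hsum i (Finset.mem_univ i)
    rcases mul_eq_zero.mp hterm with h | h
    · exact absurd h hbji.ne'
    · exact h
  -- f is injective
  have hinj : Function.Injective f := by
    intro i i' hii'
    by_contra hne
    have h1 : b (f i) i = 0 := by
      rw [hii']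
      exact bzero i' (f i') (hf i') i hne
    have h2 := binv i (f i) (hf i)
    rw [h1] at h2
    simp at h2
  let σ : Equiv.Perm (Fin r) := Equiv.ofBijective f (Finite.injective_iff_bijective.mp hinj)
  -- the positive entries are powers of n
  have hpow : ∀ i, ∃ c : ℤ, a i (f i) = (n : ℚ) ^ c := by
    intro i
    obtain ⟨x, k, hx⟩ := hamem i (f i)
    obtain ⟨y, m, hy⟩ := hbmem (f i) i
    have hinv : (a i (f i))⁻¹ = b (f i) i :=
      inv_eq_of_mul_eq_one_left (binv i (f i) (hf i))
    exact nadic_pos_unit_is_pow n hn (a i (f i)) (hf i) x k hx y m (hinv ▸ hy)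
  choose c hc using hpow
  refine ⟨σ, c, fun i j => ?_⟩
  by_cases hj : j = σ i
  · rw [if_pos hj]
    have : σ i = f i := rfl
    rw [hj, this, hc i]
  · rw [if_neg hj]
    exact azero i (f i) (hf i) j hj
end

section
/- Let X be a type, let F = (X →₀ ℕ) be the free commutative additive monoid on X, let G = (X →₀ ℤ) be the free abelian group on X, and let ι : F → G be the natural inclusion. Let I be an index type and r, s : I → F. Let c be the smallest additive monoid congruence on F containing all pairs (r_i, s_i) for i ∈ I, and let N be the subgroup of G generated by {ι(r_i) − ι(s_i) : i ∈ I}. Then the group completion (Grothendieck group) of the quotient monoid F/c is isomorphic, as an abelian group, to G/N, via an isomorphism that sends the image in the group completion of the class of f ∈ F to the coset ι(f) + N. -/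
/-!
Let F = (X →₀ ℕ) be the free commutative additive monoid on X, G = (X →₀ ℤ)
the free abelian group on X, and ι : F → G the natural inclusion.  For
relations r, s : I → F, let c be the additive monoid congruence on F generated
by the pairs (r i, s i) and N ≤ G the subgroup generated by ι(r i) − ι(s i).
Then G/N, together with the map F/c → G/N, [f] ↦ ι(f) + N, is the group
completion (Grothendieck group) of F/c: this is expressed by the universal
property of group completion.
-/

/-- The natural inclusion of the free commutative monoid on `X` into the free
abelian group on `X`. -/
noncomputable def finsuppNatToInt (X : Type*) : (X →₀ ℕ) →+ (X →₀ ℤ) :=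
  Finsupp.mapRange.addMonoidHom (Nat.castAddMonoidHom ℤ)

theorem grothendieck_group_of_quotient_monoid
    {X : Type*} {I : Type*} (r s : I → (X →₀ ℕ))
    (c : AddCon (X →₀ ℕ))
    (hc : c = addConGen (fun f g => ∃ i, r i = f ∧ s i = g))
    (N : AddSubgroup (X →₀ ℤ))
    (hN : N = AddSubgroup.closure
      (Set.range fun i => finsuppNatToInt X (r i) - finsuppNatToInt X (s i))) :
    ∃ ψ : c.Quotient →+ (X →₀ ℤ) ⧸ N,
      (∀ f : X →₀ ℕ, ψ (c.mk' f) = QuotientAddGroup.mk (finsuppNatToInt X f)) ∧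
      (∀ (H : Type*) [AddCommGroup H] (g : c.Quotient →+ H),
        ∃! h : ((X →₀ ℤ) ⧸ N) →+ H, h.comp ψ = g) := by
  -- the composite F → G → G/N
  set φ : (X →₀ ℕ) →+ (X →₀ ℤ) ⧸ N :=
    (QuotientAddGroup.mk' N).comp (finsuppNatToInt X) with hφ
  have hgen : ∀ i, (QuotientAddGroup.mk (finsuppNatToInt X (r i)) :
      (X →₀ ℤ) ⧸ N) = QuotientAddGroup.mk (finsuppNatToInt X (s i)) := by
    intro i
    rw [QuotientAddGroup.eq, hN]
    have h := neg_mem (AddSubgroup.subset_closure (Set.mem_range_self (f := fun i =>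
      finsuppNatToInt X (r i) - finsuppNatToInt X (s i)) i))
    simpa [neg_sub, sub_eq_neg_add] using h
  have hle : c ≤ AddCon.ker φ := by
    rw [hc]
    refine AddCon.addConGen_le.2 ?_
    rintro f g ⟨i, rfl, rfl⟩
    exact hgen i
  refine ⟨c.lift φ hle, fun f => c.lift_mk' hle f, ?_⟩
  intro H _ g
  -- extend g ∘ mk' : F →+ H to a hom on G using freeness
  set h₀ : (X →₀ ℤ) →+ H :=
    Finsupp.liftAddHom (fun x => zmultiplesHom H (g (c.mk' (Finsupp.single x 1)))) with hh₀
  have key : h₀.comp (finsuppNatToInt X) = g.comp c.mk' := by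
    apply Finsupp.addHom_ext
    intro x n
    induction n with
    | zero => simp
    | succ n ih =>
      have : Finsupp.single x (n + 1) = Finsupp.single x n + Finsupp.single x 1 := by
        rw [← Finsupp.single_add]
      rw [this, map_add, map_add, ih]
      congr 1
      simp [hh₀, finsuppNatToInt]
  have keyfun : ∀ f : X →₀ ℕ, h₀ (finsuppNatToInt X f) = g (c.mk' f) := fun f =>
    DFunLike.congr_fun key f
  have hker : N ≤ h₀.ker := by
    rw [hN]
    rw [AddSubgroup.closure_le]
    rintro _ ⟨i, rfl⟩
    have hmk : c.mk' (r i) = c.mk' (s i) := by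
      show ((r i : c.Quotient)) = (s i : c.Quotient)
      rw [AddCon.eq, hc]
      exact AddConGen.Rel.of _ _ ⟨i, rfl, rfl⟩
    simp only [SetLike.mem_coe, AddMonoidHom.mem_ker, map_sub, keyfun, hmk, sub_self]
  refine ⟨QuotientAddGroup.lift N h₀ hker, ?_, ?_⟩
  · apply AddMonoidHom.ext
    intro q
    induction q using AddCon.induction_on with
    | H f =>
      show (QuotientAddGroup.lift N h₀ hker) ((c.lift φ hle) (c.mk' f)) = g (c.mk' f)
      rw [c.lift_mk' hle f]
      show (QuotientAddGroup.lift N h₀ hker)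
        (QuotientAddGroup.mk (finsuppNatToInt X f)) = g (c.mk' f)
      rw [QuotientAddGroup.lift_mk]
      exact keyfun f
  · intro h' hh'
    apply QuotientAddGroup.addMonoidHom_ext
    apply Finsupp.addHom_ext'
    intro x
    apply AddMonoidHom.ext_int
    have h1 : (Finsupp.single x (1 : ℤ)) = finsuppNatToInt X (Finsupp.single x 1) := by
      simp [finsuppNatToInt]
    simp only [AddMonoidHom.comp_apply, Finsupp.singleAddHom_apply]
    rw [h1]
    have h2 := DFunLike.congr_fun hh' (c.mk' (Finsupp.single x 1))
    simp only [AddMonoidHom.comp_apply, c.lift_mk' hle] at h2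
    show h' (φ (Finsupp.single x 1)) =
      (QuotientAddGroup.lift N h₀ hker) (φ (Finsupp.single x 1))
    rw [h2]
    show g (c.mk' (Finsupp.single x 1)) = (QuotientAddGroup.lift N h₀ hker)
      (QuotientAddGroup.mk (finsuppNatToInt X (Finsupp.single x 1)))
    rw [QuotientAddGroup.lift_mk, keyfun]
end
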